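/- arXiv:1707.09186 — 5 statements merged into one kernel-verified Lean document; each statement's English description precedes it below -/
import Mathlib

section
/- For every N ≥ 1, the Boolean radius of the class of all real functions on {-1,1}^N equals 2^{1/N} − 1. That is, (i) for every f: {-1,1}^N → ℝ one has ∑_{S⊆[N]} |f̂(S)| (2^{1/N}−1)^{|S|} ≤ ‖f‖_∞, and (ii) there exists a function f with ‖f‖_∞ = 1 for which ∑_{S⊆[N]} |f̂(S)| ρ^{|S|} > 1 whenever ρ > 2^{1/N}−1. -/
def cubeChi (b : Bool) : ℝ := if b then 1 else -1

noncomputable def wCoeff {N : ℕ} (f : (Fin N → Bool) → ℝ) (S : Finset (Fin N)) : ℝ :=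
  (∑ x : Fin N → Bool, f x * ∏ i ∈ S, cubeChi (x i)) / 2 ^ N

noncomputable def cubeSup {N : ℕ} (f : (Fin N → Bool) → ℝ) : ℝ :=
  Finset.univ.sup' Finset.univ_nonempty (fun x => |f x|)

noncomputable def cubeAvg {N : ℕ} (f : (Fin N → Bool) → ℝ) : ℝ :=
  (∑ x : Fin N → Bool, f x) / 2 ^ N

lemma chi_abs (b : Bool) : |cubeChi b| = 1 := by cases b <;> simp [cubeChi]

lemma chi_prod_abs {N : ℕ} (S : Finset (Fin N)) (x : Fin N → Bool) :
    |∏ i ∈ S, cubeChi (x i)| = 1 := by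
  rw [Finset.abs_prod]
  simp [chi_abs]

lemma sum_chi {N : ℕ} (S : Finset (Fin N)) (hS : S ≠ ∅) :
    ∑ x : Fin N → Bool, ∏ i ∈ S, cubeChi (x i) = 0 := by
  have h1 : ∀ x : Fin N → Bool, ∏ i ∈ S, cubeChi (x i)
      = ∏ i, (if i ∈ S then cubeChi (x i) else 1) := by
    intro x
    rw [← Finset.prod_filter]
    congr 1
    ext i
    simp
  simp_rw [h1]
  have := Finset.prod_univ_sum (fun _ : Fin N => (Finset.univ : Finset Bool))
    (fun i b => if i ∈ S then cubeChi b else 1)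
  rw [Fintype.piFinset_univ] at this
  rw [← this]
  obtain ⟨j, hj⟩ := Finset.nonempty_iff_ne_empty.2 hS
  apply Finset.prod_eq_zero (Finset.mem_univ j)
  simp [hj, cubeChi]

lemma sum_geom {N : ℕ} (ε : ℝ) :
    ∑ S : Finset (Fin N), ε ^ S.card = (1 + ε) ^ N := by
  rw [add_comm]
  have := Finset.prod_add (fun _ : Fin N => ε) (fun _ : Fin N => (1:ℝ)) Finset.univ
  simp only [Finset.prod_const, Finset.prod_const_one, mul_one, one_pow, Finset.powerset_univ,
    Finset.card_univ, Fintype.card_fin] at this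
  rw [this]

lemma key_pair {N : ℕ} (f : (Fin N → Bool) → ℝ) (S : Finset (Fin N)) (hS : S ≠ ∅) :
    |wCoeff f ∅| + |wCoeff f S| ≤ cubeSup f := by
  have hsup : ∀ x : Fin N → Bool, |f x| ≤ cubeSup f := fun x =>
    Finset.le_sup' (fun y => |f y|) (Finset.mem_univ x)
  have key : ∀ c : ℝ, |c| = 1 →
      |wCoeff f ∅ + c * wCoeff f S| ≤ cubeSup f := by
    intro c hc
    unfold wCoeff
    rw [mul_div_assoc' c, ← add_div, abs_div, abs_of_pos (by positivity : (0:ℝ) < 2 ^ N),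
      div_le_iff₀ (by positivity)]
    rw [Finset.mul_sum, ← Finset.sum_add_distrib]
    calc |∑ x : Fin N → Bool, (f x * ∏ i ∈ (∅ : Finset (Fin N)), cubeChi (x i)
            + c * (f x * ∏ i ∈ S, cubeChi (x i)))|
        ≤ ∑ x : Fin N → Bool, |f x| * (1 + c * ∏ i ∈ S, cubeChi (x i)) := by
          refine (Finset.abs_sum_le_sum_abs _ _).trans (Finset.sum_le_sum fun x _ => ?_)
          have h0 : 0 ≤ 1 + c * ∏ i ∈ S, cubeChi (x i) := by
            have : |c * ∏ i ∈ S, cubeChi (x i)| = 1 := by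
              rw [abs_mul, hc, chi_prod_abs, mul_one]
            nlinarith [neg_abs_le (c * ∏ i ∈ S, cubeChi (x i))]
          rw [Finset.prod_empty, mul_one,
            show f x + c * (f x * ∏ i ∈ S, cubeChi (x i))
              = f x * (1 + c * ∏ i ∈ S, cubeChi (x i)) by ring,
            abs_mul, abs_of_nonneg h0]
      _ ≤ ∑ x : Fin N → Bool, cubeSup f * (1 + c * ∏ i ∈ S, cubeChi (x i)) := by
          refine Finset.sum_le_sum fun x _ => ?_
          have h0 : 0 ≤ 1 + c * ∏ i ∈ S, cubeChi (x i) := by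
            have : |c * ∏ i ∈ S, cubeChi (x i)| = 1 := by
              rw [abs_mul, hc, chi_prod_abs, mul_one]
            nlinarith [neg_abs_le (c * ∏ i ∈ S, cubeChi (x i))]
          exact mul_le_mul_of_nonneg_right (hsup x) h0
      _ = cubeSup f * 2 ^ N := by
          rw [← Finset.mul_sum]
          congr 1
          rw [Finset.sum_add_distrib, ← Finset.mul_sum, sum_chi S hS, mul_zero, add_zero]
          simp [Finset.card_univ]
  rcases le_or_gt 0 (wCoeff f ∅ * wCoeff f S) with h | h
  · -- same sign: use c = 1
    have := key 1 (by norm_num)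
    rw [one_mul] at this
    calc |wCoeff f ∅| + |wCoeff f S| = |wCoeff f ∅ + wCoeff f S| := by
          rcases abs_cases (wCoeff f ∅) with ⟨h1, h1'⟩ | ⟨h1, h1'⟩ <;>
            rcases abs_cases (wCoeff f S) with ⟨h2, h2'⟩ | ⟨h2, h2'⟩ <;>
            rcases abs_cases (wCoeff f ∅ + wCoeff f S) with ⟨h3, h3'⟩ | ⟨h3, h3'⟩ <;>
            nlinarith
      _ ≤ cubeSup f := this
  · have := key (-1) (by norm_num)
    calc |wCoeff f ∅| + |wCoeff f S| = |wCoeff f ∅ + (-1) * wCoeff f S| := by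
          rcases abs_cases (wCoeff f ∅) with ⟨h1, h1'⟩ | ⟨h1, h1'⟩ <;>
            rcases abs_cases (wCoeff f S) with ⟨h2, h2'⟩ | ⟨h2, h2'⟩ <;>
            rcases abs_cases (wCoeff f ∅ + (-1) * wCoeff f S) with ⟨h3, h3'⟩ | ⟨h3, h3'⟩ <;>
            nlinarith
      _ ≤ cubeSup f := this

lemma wCoeff_empty_le {N : ℕ} (f : (Fin N → Bool) → ℝ) :
    |wCoeff f ∅| ≤ cubeSup f := by
  have hsup : ∀ x : Fin N → Bool, |f x| ≤ cubeSup f := fun x =>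
    Finset.le_sup' (fun y => |f y|) (Finset.mem_univ x)
  unfold wCoeff
  rw [abs_div, abs_of_pos (by positivity : (0:ℝ) < 2 ^ N), div_le_iff₀ (by positivity)]
  calc |∑ x : Fin N → Bool, f x * ∏ i ∈ (∅ : Finset (Fin N)), cubeChi (x i)|
      ≤ ∑ x : Fin N → Bool, |f x| := by
        refine (Finset.abs_sum_le_sum_abs _ _).trans (le_of_eq ?_)
        simp
    _ ≤ ∑ x : Fin N → Bool, cubeSup f := Finset.sum_le_sum fun x _ => hsup x
    _ = cubeSup f * 2 ^ N := by simp [Finset.card_univ, mul_comm]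

section main
variable {N : ℕ}

lemma eps_pow (hN : 1 ≤ N) :
    (1 + ((2 : ℝ) ^ ((1 : ℝ) / N) - 1)) ^ N = 2 := by
  have hN0 : (N : ℝ) ≠ 0 := Nat.cast_ne_zero.2 (by omega)
  rw [add_sub_cancel, ← Real.rpow_natCast ((2:ℝ) ^ ((1:ℝ)/N)) N,
    ← Real.rpow_mul (by norm_num), one_div, inv_mul_cancel₀ hN0, Real.rpow_one]

lemma eps_nonneg : 0 ≤ (2 : ℝ) ^ ((1 : ℝ) / N) - 1 := by
  have : (1:ℝ) ≤ 2 ^ ((1:ℝ)/N) := Real.one_le_rpow (by norm_num) (by positivity)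
  linarith

end main

lemma wit_coeff {N : ℕ} (S : Finset (Fin N)) :
    wCoeff (fun x => if x = (fun _ => true) then (1:ℝ) else -1) S
      = (2 - (if S = ∅ then (2:ℝ) ^ N else 0)) / 2 ^ N := by
  unfold wCoeff
  congr 1
  have hsum : ∀ x : Fin N → Bool,
      (if x = (fun _ => true) then (1:ℝ) else -1) * ∏ i ∈ S, cubeChi (x i)
        = (if x = (fun _ => true) then 2 * ∏ i ∈ S, cubeChi (x i) else 0)
            - ∏ i ∈ S, cubeChi (x i) := by
    intro x; split <;> ring
  simp_rw [hsum, Finset.sum_sub_distrib]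
  rw [Finset.sum_ite_eq' Finset.univ (fun _ => true)
    (fun x => 2 * ∏ i ∈ S, cubeChi (x i))]
  have h1 : ∏ i ∈ S, cubeChi ((fun _ => true) i) = 1 := by simp [cubeChi]
  rw [if_pos (Finset.mem_univ _), h1, mul_one]
  congr 1
  by_cases hS : S = ∅
  · subst hS; simp [Finset.card_univ]
  · rw [sum_chi S hS, if_neg hS]

theorem stmt1 {N : ℕ} (hN : 1 ≤ N) :
    (∀ f : (Fin N → Bool) → ℝ,
      ∑ S : Finset (Fin N),
        |wCoeff f S| * ((2 : ℝ) ^ ((1 : ℝ) / N) - 1) ^ S.card ≤ cubeSup f) ∧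
    (∃ f : (Fin N → Bool) → ℝ, cubeSup f = 1 ∧
      ∀ ρ : ℝ, (2 : ℝ) ^ ((1 : ℝ) / N) - 1 < ρ →
        1 < ∑ S : Finset (Fin N), |wCoeff f S| * ρ ^ S.card) := by
  set ε : ℝ := (2 : ℝ) ^ ((1 : ℝ) / N) - 1 with hε
  have hε0 : 0 ≤ ε := eps_nonneg
  have hεpow : (1 + ε) ^ N = 2 := eps_pow hN
  constructor
  · intro f
    have hM0 : 0 ≤ cubeSup f - |wCoeff f ∅| := by
      have := wCoeff_empty_le f; linarith
    have split : ∑ S : Finset (Fin N), |wCoeff f S| * ε ^ S.card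
        = |wCoeff f ∅| + ∑ S ∈ Finset.univ.erase (∅ : Finset (Fin N)), |wCoeff f S| * ε ^ S.card := by
      rw [← Finset.add_sum_erase _ _ (Finset.mem_univ (∅ : Finset (Fin N)))]
      simp
    rw [split]
    have hbound : ∑ S ∈ Finset.univ.erase (∅ : Finset (Fin N)), |wCoeff f S| * ε ^ S.card
        ≤ ∑ S ∈ Finset.univ.erase (∅ : Finset (Fin N)), (cubeSup f - |wCoeff f ∅|) * ε ^ S.card := by
      refine Finset.sum_le_sum fun S hS => ?_
      have hSne : S ≠ ∅ := (Finset.mem_erase.1 hS).1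
      have := key_pair f S hSne
      exact mul_le_mul_of_nonneg_right (by linarith) (pow_nonneg hε0 _)
    have hgeom : ∑ S ∈ Finset.univ.erase (∅ : Finset (Fin N)), ε ^ S.card = 1 := by
      have h := sum_geom (N := N) ε
      rw [← Finset.add_sum_erase _ _ (Finset.mem_univ (∅ : Finset (Fin N)))] at h
      simp only [Finset.card_empty, pow_zero] at h
      linarith [hεpow, h]
    calc |wCoeff f ∅| + ∑ S ∈ Finset.univ.erase (∅ : Finset (Fin N)), |wCoeff f S| * ε ^ S.card
        ≤ |wCoeff f ∅| + (cubeSup f - |wCoeff f ∅|) * 1 := by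
          rw [← Finset.mul_sum, ← hgeom] at *
          linarith [hbound]
      _ = cubeSup f := by ring
  · -- witness
    have h2N : (2:ℝ) ≤ 2 ^ N := by
      calc (2:ℝ) = 2 ^ 1 := (pow_one 2).symm
        _ ≤ 2 ^ N := pow_le_pow_right₀ (by norm_num) hN
    have h2N0 : (0:ℝ) < 2 ^ N := by positivity
    refine ⟨fun x => if x = (fun _ => true) then 1 else -1, ?_, ?_⟩
    · apply le_antisymm
      · apply Finset.sup'_le
        intro x _
        dsimp only
        split <;> simp
      · have := Finset.le_sup' (b := (fun _ => true : Fin N → Bool))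
          (fun x : Fin N → Bool => |(if x = (fun _ => true) then (1:ℝ) else -1)|)
          (Finset.mem_univ _)
        simpa [cubeSup, -Finset.le_sup'_iff] using this
    · intro ρ hρ
      have hρ0 : (0:ℝ) ≤ ρ := le_trans hε0 hρ.le
      have hpow : (2:ℝ) < (1 + ρ) ^ N := by
        calc (2:ℝ) = (1 + ε) ^ N := hεpow.symm
          _ < (1 + ρ) ^ N := by
            apply pow_lt_pow_left₀ (by linarith) (by linarith) (by omega)
      have habs : ∀ S : Finset (Fin N),
          |wCoeff (fun x => if x = (fun _ => true) then (1:ℝ) else -1) S|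
            = (2 - (if S = ∅ then (2:ℝ) ^ N else 0)) / 2 ^ N
              + (if S = ∅ then 2 * ((2:ℝ) ^ N - 2) / 2 ^ N else 0) := by
        intro S
        rw [wit_coeff]
        by_cases hS : S = ∅
        · rw [if_pos hS, if_pos hS, abs_div, abs_of_pos h2N0,
            abs_of_nonpos (by linarith)]
          field_simp
          ring
        · rw [if_neg hS, if_neg hS, abs_div, abs_of_pos h2N0, add_zero, sub_zero,
            abs_of_nonneg (by norm_num)]
      simp_rw [habs, add_mul, Finset.sum_add_distrib]
      have hA : ∑ S : Finset (Fin N),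
          (2 - (if S = ∅ then (2:ℝ) ^ N else 0)) / 2 ^ N * ρ ^ S.card
          = (2 * (1 + ρ) ^ N - 2 ^ N) / 2 ^ N := by
        have : ∀ S : Finset (Fin N),
            (2 - (if S = ∅ then (2:ℝ) ^ N else 0)) / 2 ^ N * ρ ^ S.card
            = 2 / 2 ^ N * ρ ^ S.card
              - (if S = ∅ then (2:ℝ) ^ N / 2 ^ N * ρ ^ S.card else 0) := by
          intro S; split <;> ring
        simp_rw [this, Finset.sum_sub_distrib, ← Finset.mul_sum, sum_geom,
          Finset.sum_ite_eq' Finset.univ (∅ : Finset (Fin N))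
            (fun S => (2:ℝ) ^ N / 2 ^ N * ρ ^ S.card)]
        rw [if_pos (Finset.mem_univ _)]
        simp only [Finset.card_empty, pow_zero, mul_one]
        field_simp
      have hB : ∑ S : Finset (Fin N),
          (if S = ∅ then 2 * ((2:ℝ) ^ N - 2) / 2 ^ N else 0) * ρ ^ S.card
          = 2 * ((2:ℝ) ^ N - 2) / 2 ^ N := by
        have : ∀ S : Finset (Fin N),
            (if S = ∅ then 2 * ((2:ℝ) ^ N - 2) / 2 ^ N else 0) * ρ ^ S.card
            = if S = ∅ then 2 * ((2:ℝ) ^ N - 2) / 2 ^ N * ρ ^ S.card else 0 := by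
          intro S; split <;> ring
        simp_rw [this, Finset.sum_ite_eq' Finset.univ (∅ : Finset (Fin N))]
        simp
      rw [hA, hB]
      rw [← add_div, lt_div_iff₀ h2N0]
      nlinarith
end

section
/- For each p > 1 and γ > 0 there exist N and a function f: {-1,1}^N → {-1,1} such that (E[|f(x) − E[f]|^p])^{1/p} > γ(1 − |E[f]|); i.e., the Carathéodory-type inequality fails in L^p for any p > 1 with a uniform constant. -/
theorem stmt10 (p γ : ℝ) (hp : 1 < p) (hγ : 0 < γ) :
    ∃ (N : ℕ) (f : (Fin N → Bool) → ℝ), (∀ x, f x = 1 ∨ f x = -1) ∧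
      γ * (1 - |cubeAvg f|) < (cubeAvg (fun x => |f x - cubeAvg f| ^ p)) ^ (1 / p) := by
  have hp0 : (0:ℝ) < p := lt_trans one_pos hp
  have hp1 : (0:ℝ) < p - 1 := sub_pos.2 hp
  obtain ⟨n, hn⟩ := pow_unbounded_of_one_lt ((2*γ)^(p/(p-1)) : ℝ) (one_lt_two)
  set N := n + 1 with hN
  have h2n : ((2:ℝ)^n) < 2^N := by
    rw [hN, pow_succ]; nlinarith [pow_pos (by norm_num : (0:ℝ) < 2) n]
  have h2N : ((2*γ):ℝ)^(p/(p-1)) < 2^N := lt_trans hn h2n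
  have h2Npos : (0:ℝ) < 2^N := by positivity
  set ε : ℝ := ((2:ℝ)^N)⁻¹ with hε
  have hεpos : 0 < ε := by positivity
  have hεhalf : ε ≤ 1/2 := by
    rw [hε, hN]
    rw [inv_le_iff_one_le_mul₀ (by positivity)]
    have : (2:ℝ) ≤ 2^(n+1) := by
      calc (2:ℝ) = 2^1 := (pow_one 2).symm
      _ ≤ 2^(n+1) := by apply pow_le_pow_right₀ <;> norm_num
    nlinarith
  set x₀ : Fin N → Bool := (fun _ => false) with hx₀
  refine ⟨N, fun x => if x = x₀ then -1 else 1,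
    fun x => by by_cases h : x = x₀ <;> simp [h] <;> norm_num, ?_⟩
  set f : (Fin N → Bool) → ℝ := fun x => if x = x₀ then -1 else 1 with hf
  have hsum : ∑ x : Fin N → Bool, f x = 2^N - 2 := by
    have h1 : ∀ x : Fin N → Bool, f x = 1 - (if x = x₀ then (2:ℝ) else 0) := by
      intro x; by_cases h : x = x₀ <;> simp [hf, h] <;> norm_num
    rw [Finset.sum_congr rfl (fun x _ => h1 x), Finset.sum_sub_distrib]
    simp [Finset.sum_ite_eq', Fintype.card_fun]
  have havg : cubeAvg f = 1 - 2*ε := by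
    rw [cubeAvg, hsum, hε]; field_simp
  have havg_abs : |cubeAvg f| = 1 - 2*ε := by
    rw [havg, abs_of_nonneg]; linarith
  have hg : ∀ x : Fin N → Bool, |f x - cubeAvg f| ^ p
      = (2*ε)^p + (if x = x₀ then ((2-2*ε)^p - (2*ε)^p : ℝ) else 0) := by
    intro x; by_cases h : x = x₀
    · have hfx : f x = -1 := by simp [hf, h]
      rw [if_pos h, hfx, havg, show (-1:ℝ) - (1 - 2*ε) = -(2 - 2*ε) by ring, abs_neg,
        abs_of_nonneg (by linarith)]
      ring
    · have hfx : f x = 1 := by simp [hf, h]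
      rw [if_neg h, hfx, havg, show (1:ℝ) - (1 - 2*ε) = 2*ε by ring,
        abs_of_nonneg (by linarith)]
      ring
  have hsumg : ∑ x : Fin N → Bool, |f x - cubeAvg f| ^ p
      = 2^N * (2*ε)^p + ((2-2*ε)^p - (2*ε)^p) := by
    rw [Finset.sum_congr rfl (fun x _ => hg x), Finset.sum_add_distrib]
    simp [Finset.sum_ite_eq', Fintype.card_fun, mul_comm]
  have havgg : cubeAvg (fun x => |f x - cubeAvg f| ^ p)
      = (2*ε)^p + ε * ((2-2*ε)^p - (2*ε)^p) := by
    rw [cubeAvg, hsumg, hε]; field_simp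
  have hlow : ε * (2-2*ε)^p ≤ cubeAvg (fun x => |f x - cubeAvg f| ^ p) := by
    rw [havgg]
    have h1 : (0:ℝ) ≤ (2*ε)^p := Real.rpow_nonneg (by linarith) p
    nlinarith [h1, hεhalf]
  have hb : (0:ℝ) < 2 := two_pos
  have hεr : ε = (2:ℝ) ^ (-(N:ℝ)) := by
    rw [hε, Real.rpow_neg hb.le, Real.rpow_natCast]
  have hexp : (0:ℝ) < (p-1)/p := by positivity
  have hkey : 2*γ*ε < ε ^ (1/p) := by
    have h1 : ((2*γ)^(p/(p-1)) : ℝ) ^ ((p-1)/p) < ((2:ℝ)^N) ^ ((p-1)/p) :=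
      Real.rpow_lt_rpow (by positivity) h2N hexp
    have h2 : ((2*γ)^(p/(p-1)) : ℝ) ^ ((p-1)/p) = 2*γ := by
      rw [← Real.rpow_mul (by positivity : (0:ℝ) ≤ 2*γ),
        show p/(p-1) * ((p-1)/p) = 1 by field_simp, Real.rpow_one]
    have h3 : ((2:ℝ)^N : ℝ) ^ ((p-1)/p) = (2:ℝ) ^ ((N:ℝ)*((p-1)/p)) := by
      rw [← Real.rpow_natCast 2 N, ← Real.rpow_mul hb.le]
    have h4 : 2*γ < (2:ℝ) ^ ((N:ℝ)*((p-1)/p)) := by rw [← h3, ← h2]; exact h1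
    have h5 : ε ^ (1/p) = (2:ℝ) ^ (-(N:ℝ) * (1/p)) := by
      rw [hεr, ← Real.rpow_mul hb.le]
    rw [h5, hεr]
    have h7 : (2:ℝ) ^ (-(N:ℝ)*(1/p)) = (2:ℝ)^((N:ℝ)*((p-1)/p)) * (2:ℝ)^(-(N:ℝ)) := by
      rw [← Real.rpow_add hb]; congr 1; field_simp; ring
    rw [h7]
    exact mul_lt_mul_of_pos_right h4 (by positivity)
  have h6 : (ε * (2-2*ε)^p) ^ (1/p) = ε^(1/p) * (2-2*ε) := by
    rw [Real.mul_rpow hεpos.le (Real.rpow_nonneg (by linarith) p),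
      ← Real.rpow_mul (by linarith : (0:ℝ) ≤ 2-2*ε), mul_one_div, div_self hp0.ne',
      Real.rpow_one]
  calc γ * (1 - |cubeAvg f|) = 2*γ*ε := by rw [havg_abs]; ring
    _ < ε^(1/p) := hkey
    _ ≤ ε^(1/p) * (2-2*ε) :=
        le_mul_of_one_le_right (Real.rpow_nonneg hεpos.le _) (by linarith)
    _ = (ε * (2-2*ε)^p)^(1/p) := h6.symm
    _ ≤ _ := Real.rpow_le_rpow
        (mul_nonneg hεpos.le (Real.rpow_nonneg (by linarith) p)) hlow (by positivity)
end

section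
/- For every d ≥ 1 there is a constant c_d > 0, independent of N, such that for every function f: {-1,1}^N → ℝ of degree at most d with ‖f‖_∞ ≤ 1, one has ∑_{S⊆[N]} |f̂(S)| (c_d/√N)^{|S|} ≤ 1. In particular the Boolean radius of the class of degree-≤d functions on {-1,1}^N is at least c_d/√N. -/
lemma chi_mul_self (b : Bool) : cubeChi b * cubeChi b = 1 := by cases b <;> simp [cubeChi]

lemma card_cube (N : ℕ) : (Finset.univ : Finset (Fin N → Bool)).card = 2 ^ N := by
  simp [Finset.card_univ]

lemma sum_prod_chi {N : ℕ} (U : Finset (Fin N)) :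
    ∑ x : Fin N → Bool, ∏ i ∈ U, cubeChi (x i) = if U = ∅ then (2:ℝ)^N else 0 := by
  have h : ∀ x : Fin N → Bool, ∏ i ∈ U, cubeChi (x i)
      = ∏ i : Fin N, (if i ∈ U then cubeChi (x i) else (1:ℝ)) := by
    intro x
    rw [Finset.prod_ite_mem, Finset.univ_inter]
  simp_rw [h]
  rw [← Fintype.piFinset_univ,
    ← Finset.prod_univ_sum (fun _ => (Finset.univ : Finset Bool))
      (fun i b => if i ∈ U then cubeChi b else (1:ℝ))]
  by_cases hU : U = ∅
  · subst hU; simp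
  · obtain ⟨i, hi⟩ := Finset.nonempty_iff_ne_empty.2 hU
    rw [if_neg hU]
    apply Finset.prod_eq_zero (Finset.mem_univ i)
    simp [hi, cubeChi]


lemma sum_finset_prod {ι : Type*} [Fintype ι] [DecidableEq ι] (e : ι → ℝ) :
    ∑ S : Finset ι, ∏ i ∈ S, e i = ∏ i : ι, (e i + 1) := by
  rw [Finset.prod_add]
  rw [← Finset.powerset_univ]
  exact Finset.sum_congr rfl fun t _ => by simp

lemma kernel {N : ℕ} (x y : Fin N → Bool) :
    ∑ S : Finset (Fin N), (∏ i ∈ S, cubeChi (x i)) * (∏ i ∈ S, cubeChi (y i))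
      = if x = y then (2:ℝ)^N else 0 := by
  simp_rw [← Finset.prod_mul_distrib]
  rw [sum_finset_prod]
  by_cases hxy : x = y
  · subst hxy
    rw [if_pos rfl]
    have : ∀ i : Fin N, cubeChi (x i) * cubeChi (x i) + 1 = 2 := by
      intro i; rw [chi_mul_self]; norm_num
    simp_rw [this]
    simp
  · rw [if_neg hxy]
    obtain ⟨i, hi⟩ : ∃ i, x i ≠ y i := by
      by_contra hc; push_neg at hc; exact hxy (funext hc)
    apply Finset.prod_eq_zero (Finset.mem_univ i)
    revert hi; cases x i <;> cases y i <;> simp [cubeChi]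

lemma inversion {N : ℕ} (f : (Fin N → Bool) → ℝ) (x : Fin N → Bool) :
    ∑ S : Finset (Fin N), wCoeff f S * ∏ i ∈ S, cubeChi (x i) = f x := by
  have key : ∀ y : Fin N → Bool,
      ∑ S : Finset (Fin N), f y * ((∏ i ∈ S, cubeChi (y i)) * ∏ i ∈ S, cubeChi (x i))
        = f y * (if y = x then (2:ℝ)^N else 0) := fun y => by
    rw [← Finset.mul_sum, kernel]
  have h2 : (0:ℝ) < 2 ^ N := by positivity
  calc ∑ S : Finset (Fin N), wCoeff f S * ∏ i ∈ S, cubeChi (x i)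
      = (∑ S : Finset (Fin N), ∑ y : Fin N → Bool,
          f y * ((∏ i ∈ S, cubeChi (y i)) * ∏ i ∈ S, cubeChi (x i))) / 2^N := by
        rw [Finset.sum_div]
        refine Finset.sum_congr rfl fun S _ => ?_
        rw [wCoeff, div_mul_eq_mul_div, Finset.sum_mul]
        congr 1
        exact Finset.sum_congr rfl fun y _ => by ring
    _ = (∑ y : Fin N → Bool, f y * (if y = x then (2:ℝ)^N else 0)) / 2^N := by
        rw [Finset.sum_comm]
        exact congrArg (· / (2:ℝ)^N) (Finset.sum_congr rfl fun y _ => key y)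
    _ = f x := by
        simp only [mul_ite, mul_zero, Finset.sum_ite_eq', Finset.mem_univ, if_pos]
        field_simp

lemma parseval {N : ℕ} (f : (Fin N → Bool) → ℝ) :
    ∑ S : Finset (Fin N), (wCoeff f S)^2 = (∑ x : Fin N → Bool, (f x)^2) / 2^N := by
  calc ∑ S : Finset (Fin N), (wCoeff f S)^2
      = (∑ S : Finset (Fin N), ∑ x : Fin N → Bool,
          f x * (wCoeff f S * ∏ i ∈ S, cubeChi (x i))) / 2^N := by
        rw [Finset.sum_div]
        refine Finset.sum_congr rfl fun S _ => ?_
        rw [sq]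
        nth_rewrite 2 [wCoeff]
        rw [← mul_div_assoc, Finset.mul_sum]
        congr 1
        exact Finset.sum_congr rfl fun y _ => by ring
    _ = (∑ x : Fin N → Bool, f x *
          ∑ S : Finset (Fin N), wCoeff f S * ∏ i ∈ S, cubeChi (x i)) / 2^N := by
        rw [Finset.sum_comm]
        simp_rw [← Finset.mul_sum]
    _ = (∑ x : Fin N → Bool, (f x)^2) / 2^N := by
        simp_rw [inversion, sq]

lemma wCoeff_one_sub {N : ℕ} (σ : ℝ) (f : (Fin N → Bool) → ℝ) (S : Finset (Fin N)) :
    wCoeff (fun x => 1 - σ * f x) S = (if S = ∅ then 1 else 0) - σ * wCoeff f S := by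
  unfold wCoeff
  have h2 : (0:ℝ) < 2 ^ N := by positivity
  have expand : ∑ x : Fin N → Bool, (1 - σ * f x) * ∏ i ∈ S, cubeChi (x i)
      = (∑ x : Fin N → Bool, ∏ i ∈ S, cubeChi (x i))
        - σ * ∑ x : Fin N → Bool, f x * ∏ i ∈ S, cubeChi (x i) := by
    rw [Finset.mul_sum, ← Finset.sum_sub_distrib]
    exact Finset.sum_congr rfl fun x _ => by ring
  simp only [expand, sum_prod_chi S]
  rw [sub_div, mul_div_assoc]
  congr 1
  split
  · rw [div_self (ne_of_gt h2)]
  · rw [zero_div]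

def DegLE {N : ℕ} (f : (Fin N → Bool) → ℝ) (d : ℕ) : Prop :=
  ∀ S : Finset (Fin N), d < S.card → wCoeff f S = 0

noncomputable def gpart {N : ℕ} (f : (Fin (N+1) → Bool) → ℝ) : (Fin N → Bool) → ℝ :=
  fun y => (f (Fin.cons true y) + f (Fin.cons false y)) / 2

noncomputable def hpart {N : ℕ} (f : (Fin (N+1) → Bool) → ℝ) : (Fin N → Bool) → ℝ :=
  fun y => (f (Fin.cons true y) - f (Fin.cons false y)) / 2

lemma sum_cube_succ {N : ℕ} (F : (Fin (N+1) → Bool) → ℝ) :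
    ∑ x : Fin (N+1) → Bool, F x
      = ∑ y : Fin N → Bool, (F (Fin.cons true y) + F (Fin.cons false y)) := by
  rw [← (Fin.consEquiv (fun _ => Bool)).sum_comp F]
  rw [Fintype.sum_prod_type_right]
  exact Finset.sum_congr rfl fun y _ => by simp [Fin.consEquiv]

def succEmb (N : ℕ) : Fin N ↪ Fin (N+1) := ⟨Fin.succ, Fin.succ_injective N⟩

lemma zero_not_mem_map {N : ℕ} (T : Finset (Fin N)) : (0 : Fin (N+1)) ∉ T.map (succEmb N) := by
  simp only [Finset.mem_map, not_exists]
  rintro j ⟨hj, hj0⟩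
  exact absurd hj0 (Fin.succ_ne_zero j)

lemma prod_chi_cons {N : ℕ} (T : Finset (Fin N)) (b : Bool) (y : Fin N → Bool) :
    ∏ i ∈ T.map (succEmb N), cubeChi ((Fin.cons b y : Fin (N+1) → Bool) i) = ∏ j ∈ T, cubeChi (y j) := by
  rw [Finset.prod_map]
  exact Finset.prod_congr rfl fun j _ => by simp [succEmb, Fin.cons_succ]

lemma wCoeff_gpart {N : ℕ} (f : (Fin (N+1) → Bool) → ℝ) (T : Finset (Fin N)) :
    wCoeff (gpart f) T = wCoeff f (T.map (succEmb N)) := by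
  unfold wCoeff gpart
  rw [sum_cube_succ (fun x => f x * ∏ i ∈ T.map (succEmb N), cubeChi (x i))]
  simp only [prod_chi_cons]
  have hnum : ∑ y : Fin N → Bool, (f (Fin.cons true y) + f (Fin.cons false y)) / 2
        * ∏ j ∈ T, cubeChi (y j)
      = (∑ y : Fin N → Bool, (f (Fin.cons true y) * ∏ j ∈ T, cubeChi (y j)
        + f (Fin.cons false y) * ∏ j ∈ T, cubeChi (y j))) / 2 := by
    rw [Finset.sum_div]
    exact Finset.sum_congr rfl fun y _ => by ring
  rw [hnum, div_div, pow_succ, mul_comm ((2:ℝ)^N) 2]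

lemma wCoeff_hpart {N : ℕ} (f : (Fin (N+1) → Bool) → ℝ) (T : Finset (Fin N)) :
    wCoeff (hpart f) T = wCoeff f (insert 0 (T.map (succEmb N))) := by
  unfold wCoeff hpart
  rw [sum_cube_succ (fun x => f x * ∏ i ∈ insert 0 (T.map (succEmb N)), cubeChi (x i))]
  have hins : ∀ (b : Bool) (y : Fin N → Bool),
      ∏ i ∈ insert 0 (T.map (succEmb N)), cubeChi ((Fin.cons b y : Fin (N+1) → Bool) i)
        = cubeChi b * ∏ j ∈ T, cubeChi (y j) := by
    intro b y
    rw [Finset.prod_insert (zero_not_mem_map T), prod_chi_cons]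
    simp [Fin.cons_zero]
  simp only [hins]
  have hnum : ∑ y : Fin N → Bool, (f (Fin.cons true y) - f (Fin.cons false y)) / 2
        * ∏ j ∈ T, cubeChi (y j)
      = (∑ y : Fin N → Bool, (f (Fin.cons true y) * (cubeChi true * ∏ j ∈ T, cubeChi (y j))
        + f (Fin.cons false y) * (cubeChi false * ∏ j ∈ T, cubeChi (y j)))) / 2 := by
    rw [Finset.sum_div]
    refine Finset.sum_congr rfl fun y _ => ?_
    simp only [cubeChi]
    norm_num
    ring
  rw [hnum, div_div, pow_succ, mul_comm ((2:ℝ)^N) 2]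

lemma degLE_gpart {N d : ℕ} {f : (Fin (N+1) → Bool) → ℝ} (hf : DegLE f d) :
    DegLE (gpart f) d := by
  intro T hT
  rw [wCoeff_gpart]
  exact hf _ (by rwa [Finset.card_map])

lemma degLE_hpart {N d : ℕ} {f : (Fin (N+1) → Bool) → ℝ} (hf : DegLE f (d+1)) :
    DegLE (hpart f) d := by
  intro T hT
  rw [wCoeff_hpart]
  apply hf
  rw [Finset.card_insert_of_notMem (zero_not_mem_map T), Finset.card_map]
  omega

lemma degLE_zero_const {N : ℕ} (f : (Fin N → Bool) → ℝ) (hf : DegLE f 0) (x : Fin N → Bool) :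
    f x = wCoeff f ∅ := by
  rw [← inversion f x, Finset.sum_eq_single ∅]
  · simp
  · intro S _ hS
    rw [hf S (by simpa [Finset.card_pos, Finset.nonempty_iff_ne_empty] using hS), zero_mul]
  · simp

set_option maxHeartbeats 1000000 in
lemma bonami : ∀ (d N : ℕ) (f : (Fin N → Bool) → ℝ), DegLE f d →
    (2:ℝ)^N * ∑ x : Fin N → Bool, (f x)^4 ≤ 9^d * (∑ x : Fin N → Bool, (f x)^2)^2 := by
  intro d
  induction d with
  | zero =>
    intro N f hf
    have hc : ∀ x : Fin N → Bool, f x = wCoeff f ∅ := degLE_zero_const f hf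
    simp_rw [hc]
    rw [Finset.sum_const, Finset.sum_const, card_cube, nsmul_eq_mul, nsmul_eq_mul]
    push_cast
    ring_nf
    exact le_refl _
  | succ d ih =>
    intro N
    induction N with
    | zero =>
      intro f _
      rw [Fintype.sum_unique, Fintype.sum_unique]
      have h9 : (1:ℝ) ≤ 9^(d+1) := one_le_pow₀ (by norm_num)
      nlinarith [sq_nonneg ((f default)^2), sq_nonneg (f default)]
    | succ N ihN =>
      intro f hf
      set g := gpart f with hg
      set h := hpart f with hh
      have hft : ∀ y, f (Fin.cons true y) = g y + h y := by
        intro y; rw [hg, hh]; unfold gpart hpart; ring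
      have hff : ∀ y, f (Fin.cons false y) = g y - h y := by
        intro y; rw [hg, hh]; unfold gpart hpart; ring
      set G2 := ∑ y : Fin N → Bool, (g y)^2 with hG2
      set H2 := ∑ y : Fin N → Bool, (h y)^2 with hH2
      set G4 := ∑ y : Fin N → Bool, (g y)^4 with hG4
      set H4 := ∑ y : Fin N → Bool, (h y)^4 with hH4
      set M := ∑ y : Fin N → Bool, (g y)^2 * (h y)^2 with hM
      have s2 : ∑ x : Fin (N+1) → Bool, (f x)^2 = 2 * (G2 + H2) := by
        rw [sum_cube_succ (fun x => (f x)^2)]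
        have : ∀ y : Fin N → Bool, (f (Fin.cons true y))^2 + (f (Fin.cons false y))^2
            = 2 * ((g y)^2 + (h y)^2) := by
          intro y; rw [hft, hff]; ring
        simp_rw [this]
        rw [← Finset.mul_sum, Finset.sum_add_distrib]
      have s4 : ∑ x : Fin (N+1) → Bool, (f x)^4 = 2 * (G4 + 6 * M + H4) := by
        rw [sum_cube_succ (fun x => (f x)^4)]
        have : ∀ y : Fin N → Bool, (f (Fin.cons true y))^4 + (f (Fin.cons false y))^4
            = 2 * ((g y)^4 + 6 * ((g y)^2 * (h y)^2) + (h y)^4) := by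
          intro y; rw [hft, hff]; ring
        simp_rw [this]
        rw [← Finset.mul_sum, Finset.sum_add_distrib, Finset.sum_add_distrib, ← Finset.mul_sum]
      have hG2n : 0 ≤ G2 := Finset.sum_nonneg fun y _ => sq_nonneg _
      have hH2n : 0 ≤ H2 := Finset.sum_nonneg fun y _ => sq_nonneg _
      have hG4n : 0 ≤ G4 := Finset.sum_nonneg fun y _ => by positivity
      have hH4n : 0 ≤ H4 := Finset.sum_nonneg fun y _ => by positivity
      have hMn : 0 ≤ M := Finset.sum_nonneg fun y _ => by positivity
      have hP : (0:ℝ) < 2^N := by positivity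
      have hCS : M^2 ≤ G4 * H4 := by
        have := Finset.sum_mul_sq_le_sq_mul_sq Finset.univ
          (fun y : Fin N → Bool => (g y)^2) (fun y => (h y)^2)
        simpa [← pow_mul, hM, hG4, hH4] using this
      have ihg : (2:ℝ)^N * G4 ≤ 9^(d+1) * G2^2 := ihN g (degLE_gpart hf)
      have ihh : (2:ℝ)^N * H4 ≤ 9^d * H2^2 := ih N h (degLE_hpart hf)
      have h9 : (9:ℝ)^(d+1) = 3^(2*d+1) * 3 := by
        rw [show (9:ℝ) = 3^2 by norm_num, ← pow_mul, show 2*(d+1) = 2*d+1+1 by ring, pow_succ]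
      have key : (2:ℝ)^N * M ≤ 3^(2*d+1) * (G2 * H2) := by
        apply le_of_sq_le_sq _ (by positivity)
        calc ((2:ℝ)^N * M)^2 = (2^N * 2^N) * M^2 := by ring
          _ ≤ (2^N * 2^N) * (G4 * H4) := by
              apply mul_le_mul_of_nonneg_left hCS (by positivity)
          _ = (2^N * G4) * (2^N * H4) := by ring
          _ ≤ (9^(d+1) * G2^2) * (9^d * H2^2) := by
              apply mul_le_mul ihg ihh (by positivity) (by positivity)
          _ = (3^(2*d+1) * (G2 * H2))^2 := by
              rw [show (9:ℝ)^(d+1) * G2^2 * (9^d * H2^2)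
                  = (9^(d+1) * 9^d) * (G2^2 * H2^2) by ring]
              rw [show (9:ℝ)^(d+1) * 9^d = 9^(2*d+1) by rw [← pow_add]; ring_nf]
              rw [show (9:ℝ)^(2*d+1) = (3^(2*d+1))^2 by
                rw [show (9:ℝ) = 3^2 by norm_num, ← pow_mul, ← pow_mul]; ring_nf]
              ring
      have h9d : (9:ℝ)^d ≤ 9^(d+1) := pow_le_pow_right₀ (by norm_num) (Nat.le_succ d)
      have hH2sq : (0:ℝ) ≤ H2^2 := sq_nonneg _
      have hh' : (2:ℝ)^N * H4 ≤ 9^(d+1) * H2^2 :=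
        le_trans ihh (mul_le_mul_of_nonneg_right h9d hH2sq)
      have key6 : 6 * ((2:ℝ)^N * M) ≤ 2 * 9^(d+1) * (G2 * H2) := by
        rw [h9]; linarith [key]
      rw [s2, s4, pow_succ]
      nlinarith [ihg, hh', key6]

set_option maxHeartbeats 1000000 in
theorem stmt12 (d : ℕ) (hd : 1 ≤ d) :
    ∃ c : ℝ, 0 < c ∧ ∀ (N : ℕ) (f : (Fin N → Bool) → ℝ),
      (∀ S : Finset (Fin N), d < S.card → wCoeff f S = 0) →
      cubeSup f ≤ 1 →
      ∑ S : Finset (Fin N), |wCoeff f S| * (c / Real.sqrt N) ^ S.card ≤ 1 := by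
  have hd0 : (0:ℝ) < d := by exact_mod_cast hd
  have h3d : (1:ℝ) ≤ 3^d * d := by
    have h1 : (1:ℝ) ≤ 3^d := one_le_pow₀ (by norm_num)
    have h2 : (1:ℝ) ≤ d := by exact_mod_cast hd
    nlinarith
  refine ⟨1 / ((3:ℝ)^d * d), by positivity, ?_⟩
  set c : ℝ := 1 / ((3:ℝ)^d * d) with hc_def
  have hc0 : 0 < c := by positivity
  have hc1 : c ≤ 1 := by
    rw [hc_def, div_le_one (by positivity)]; exact h3d
  intro N f hdeg hsup
  set ρ : ℝ := c / Real.sqrt N with hρ_def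
  have hρ0 : 0 ≤ ρ := by positivity
  have hρ2 : ρ^2 = c^2 / N := by
    rw [hρ_def, div_pow, Real.sq_sqrt (Nat.cast_nonneg N)]
  have hP : (0:ℝ) < 2^N := by positivity
  have hsupx : ∀ x, |f x| ≤ 1 := fun x =>
    le_trans (Finset.le_sup' (fun x => |f x|) (Finset.mem_univ x)) hsup
  set a : ℝ := wCoeff f ∅ with ha_def
  have habs : |a| ≤ 1 := by
    rw [ha_def, wCoeff]
    simp only [Finset.prod_empty, mul_one]
    rw [abs_div, abs_of_pos hP, div_le_one hP]
    calc |∑ x : Fin N → Bool, f x| ≤ ∑ x : Fin N → Bool, |f x| :=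
          Finset.abs_sum_le_sum_abs _ _
      _ ≤ ∑ x : Fin N → Bool, (1:ℝ) := Finset.sum_le_sum fun x _ => hsupx x
      _ = 2^N := by
          rw [Finset.sum_const, card_cube, nsmul_eq_mul, mul_one]
          push_cast
          ring
  set ε : ℝ := 1 - |a| with hε_def
  have hε : 0 ≤ ε := by rw [hε_def]; linarith
  set σ : ℝ := if 0 ≤ a then 1 else -1 with hσ_def
  have hσa : σ * a = |a| := by
    rw [hσ_def]; split
    · rw [one_mul, abs_of_nonneg ‹_›]
    · have hlt := not_le.1 ‹¬ 0 ≤ a›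
      rw [abs_of_neg (by linarith)]
      ring
  have hσabs : ∀ t : ℝ, |σ * t| = |t| := by
    intro t; rw [abs_mul, hσ_def]; split <;> simp
  have hσ2 : σ^2 = 1 := by rw [hσ_def]; split <;> norm_num
  set g : (Fin N → Bool) → ℝ := fun x => 1 - σ * f x with hg_def
  have hg0 : ∀ x, 0 ≤ g x := by
    intro x
    have : σ * f x ≤ 1 := le_trans (le_abs_self _) (by rw [hσabs]; exact hsupx x)
    simp only [hg_def]; linarith
  have hgS : ∀ S, wCoeff g S = (if S = ∅ then 1 else 0) - σ * wCoeff f S :=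
    wCoeff_one_sub σ f
  have hdeg_g : DegLE g d := by
    intro S hS
    rw [hgS S, if_neg, hdeg S hS, mul_zero, sub_zero]
    intro hSe
    rw [hSe] at hS; simp at hS
  set P1 := ∑ x : Fin N → Bool, g x with hP1_def
  have hP1 : P1 = 2^N * ε := by
    have h1 : wCoeff g ∅ = 1 - |a| := by rw [hgS ∅, if_pos rfl, hσa]
    have h2 : wCoeff g ∅ = P1 / 2^N := by
      rw [wCoeff, hP1_def]; simp
    rw [h2] at h1
    rw [hε_def]
    field_simp at h1 ⊢
    linarith
  have hP1n : 0 ≤ P1 := Finset.sum_nonneg fun x _ => hg0 x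
  set Q2 := ∑ x : Fin N → Bool, (g x)^2 with hQ2_def
  set R3 := ∑ x : Fin N → Bool, (g x)^3 with hR3_def
  set F4 := ∑ x : Fin N → Bool, (g x)^4 with hF4_def
  have hQ2n : 0 ≤ Q2 := Finset.sum_nonneg fun x _ => sq_nonneg _
  have hR3n : 0 ≤ R3 := Finset.sum_nonneg fun x _ => pow_nonneg (hg0 x) 3
  have hF4n : 0 ≤ F4 := Finset.sum_nonneg fun x _ => by positivity
  have c1 : Q2^2 ≤ P1 * R3 := by
    have hcs := Finset.sum_mul_sq_le_sq_mul_sq Finset.univ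
      (fun x : Fin N → Bool => Real.sqrt (g x)) (fun x => g x * Real.sqrt (g x))
    have e1 : ∀ x : Fin N → Bool, Real.sqrt (g x) * (g x * Real.sqrt (g x)) = (g x)^2 := by
      intro x
      rw [show Real.sqrt (g x) * (g x * Real.sqrt (g x))
          = g x * (Real.sqrt (g x) * Real.sqrt (g x)) by ring,
        Real.mul_self_sqrt (hg0 x), sq]
    have e2 : ∀ x : Fin N → Bool, (Real.sqrt (g x))^2 = g x := fun x => Real.sq_sqrt (hg0 x)
    have e3 : ∀ x : Fin N → Bool, (g x * Real.sqrt (g x))^2 = (g x)^3 := by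
      intro x
      rw [mul_pow, Real.sq_sqrt (hg0 x)]; ring
    simp only [e1, e2, e3] at hcs
    exact hcs
  have c2 : R3^2 ≤ Q2 * F4 := by
    have hcs := Finset.sum_mul_sq_le_sq_mul_sq Finset.univ
      (fun x : Fin N → Bool => g x) (fun x => (g x)^2)
    have e1 : ∀ x : Fin N → Bool, g x * (g x)^2 = (g x)^3 := fun x => by ring
    have e3 : ∀ x : Fin N → Bool, ((g x)^2)^2 = (g x)^4 := fun x => by ring
    simp only [e1, e3] at hcs
    exact hcs
  have c3 : (2:ℝ)^N * F4 ≤ 9^d * Q2^2 := bonami d N g hdeg_g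
  have hQ : (2:ℝ)^N * Q2 ≤ 9^d * P1^2 := by
    rcases eq_or_lt_of_le hQ2n with hQ0 | hQ0
    · rw [← hQ0, mul_zero]; positivity
    · have hQ3 : (0:ℝ) < Q2^3 := by positivity
      have chain : ((2:ℝ)^N * Q2) * Q2^3 ≤ (9^d * P1^2) * Q2^3 := by
        calc ((2:ℝ)^N * Q2) * Q2^3 = 2^N * (Q2^2)^2 := by ring
          _ ≤ 2^N * (P1 * R3)^2 :=
              mul_le_mul_of_nonneg_left (pow_le_pow_left₀ (sq_nonneg Q2) c1 2) hP.le
          _ = P1^2 * (2^N * R3^2) := by ring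
          _ ≤ P1^2 * (2^N * (Q2 * F4)) :=
              mul_le_mul_of_nonneg_left
                (mul_le_mul_of_nonneg_left c2 hP.le) (sq_nonneg P1)
          _ = (P1^2 * Q2) * (2^N * F4) := by ring
          _ ≤ (P1^2 * Q2) * (9^d * Q2^2) :=
              mul_le_mul_of_nonneg_left c3 (by positivity)
          _ = (9^d * P1^2) * Q2^3 := by ring
      exact le_of_mul_le_mul_right chain hQ3
  have hQP : Q2 / 2^N ≤ 9^d * ε^2 := by
    rw [div_le_iff₀ hP]
    rw [hP1] at hQ
    nlinarith [hQ, hP]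
  -- the weighted sum
  rw [← Finset.add_sum_erase _ _ (Finset.mem_univ (∅ : Finset (Fin N)))]
  rw [Finset.card_empty, pow_zero, mul_one, ← ha_def]
  have hsplit : ∑ S ∈ Finset.univ.erase (∅ : Finset (Fin N)), |wCoeff f S| * ρ^S.card ≤ ε := by
    set T := (Finset.univ.erase (∅ : Finset (Fin N))).filter (fun S => S.card ≤ d) with hT_def
    have hsub : ∑ S ∈ T, |wCoeff f S| * ρ^S.card
        = ∑ S ∈ Finset.univ.erase (∅ : Finset (Fin N)), |wCoeff f S| * ρ^S.card := by
      apply Finset.sum_subset (Finset.filter_subset _ _)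
      intro S hS hST
      have hdlt : d < S.card := by
        rcases lt_or_ge d S.card with h | h
        · exact h
        · exact absurd (Finset.mem_filter.2 ⟨hS, h⟩) hST
      rw [hdeg S hdlt, abs_zero, zero_mul]
    rw [← hsub]
    have hcs := Finset.sum_mul_sq_le_sq_mul_sq T (fun S => |wCoeff f S|) (fun S => ρ^S.card)
    have hA : ∑ S ∈ T, |wCoeff f S|^2 ≤ 9^d * ε^2 := by
      have e1 : ∀ S ∈ T, |wCoeff f S|^2 = (wCoeff g S)^2 := by
        intro S hS
        have hSne : S ≠ ∅ := (Finset.mem_erase.1 (Finset.mem_filter.1 hS).1).1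
        rw [sq_abs, hgS S, if_neg hSne, zero_sub, neg_sq, mul_pow, hσ2, one_mul]
      rw [Finset.sum_congr rfl e1]
      calc ∑ S ∈ T, (wCoeff g S)^2 ≤ ∑ S : Finset (Fin N), (wCoeff g S)^2 :=
            Finset.sum_le_sum_of_subset_of_nonneg (Finset.subset_univ T)
              (fun S _ _ => sq_nonneg _)
        _ = Q2 / 2^N := parseval g
        _ ≤ 9^d * ε^2 := hQP
    have hB : ∑ S ∈ T, (ρ^S.card)^2 ≤ d * c^2 := by
      have e2 : ∀ S ∈ T, (ρ^S.card)^2 = (ρ^2)^S.card := by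
        intro S _; rw [← pow_mul, ← pow_mul, mul_comm]
      rw [Finset.sum_congr rfl e2]
      have hBsub : T ⊆ (Finset.Icc 1 d).biUnion
          (fun m => Finset.powersetCard m (Finset.univ : Finset (Fin N))) := by
        intro S hS
        rcases Finset.mem_filter.1 hS with ⟨hS1, hS2⟩
        have hSne := (Finset.mem_erase.1 hS1).1
        have hpos : 1 ≤ S.card := Finset.card_pos.2 (Finset.nonempty_iff_ne_empty.2 hSne)
        exact Finset.mem_biUnion.2 ⟨S.card, Finset.mem_Icc.2 ⟨hpos, hS2⟩,
          Finset.mem_powersetCard.2 ⟨Finset.subset_univ S, rfl⟩⟩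
      calc ∑ S ∈ T, (ρ^2)^S.card
          ≤ ∑ S ∈ (Finset.Icc 1 d).biUnion
              (fun m => Finset.powersetCard m (Finset.univ : Finset (Fin N))), (ρ^2)^S.card :=
            Finset.sum_le_sum_of_subset_of_nonneg hBsub (fun S _ _ => by positivity)
        _ = ∑ m ∈ Finset.Icc 1 d, ∑ S ∈ Finset.powersetCard m (Finset.univ : Finset (Fin N)),
              (ρ^2)^S.card := by
            apply Finset.sum_biUnion
            intro m1 _ m2 _ hne
            simp only [Function.onFun]
            rw [Finset.disjoint_left]
            intro Sx hx1 hx2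
            exact hne (((Finset.mem_powersetCard.1 hx1).2.symm).trans
              (Finset.mem_powersetCard.1 hx2).2)
        _ ≤ ∑ m ∈ Finset.Icc 1 d, c^2 := by
            apply Finset.sum_le_sum
            intro m hm
            rcases Finset.mem_Icc.1 hm with ⟨hm1, _⟩
            have hin : ∑ S ∈ Finset.powersetCard m (Finset.univ : Finset (Fin N)), (ρ^2)^S.card
                = (N.choose m : ℝ) * (ρ^2)^m := by
              rw [Finset.sum_congr rfl (fun S hS => by
                  rw [(Finset.mem_powersetCard.1 hS).2]),
                Finset.sum_const, Finset.card_powersetCard, Finset.card_univ,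
                Fintype.card_fin, nsmul_eq_mul]
            rw [hin, hρ2]
            rcases Nat.eq_zero_or_pos N with hN | hN
            · subst hN
              rw [Nat.choose_eq_zero_of_lt (by omega)]
              simp only [Nat.cast_zero, zero_mul]
              positivity
            · have h1 : (N.choose m : ℝ) ≤ (N:ℝ)^m := by exact_mod_cast Nat.choose_le_pow N m
              have hNpos : (0:ℝ) < N := by exact_mod_cast hN
              calc (N.choose m : ℝ) * (c^2/N)^m
                  ≤ (N:ℝ)^m * (c^2/N)^m := mul_le_mul_of_nonneg_right h1 (by positivity)
                _ = (c^2)^m := by rw [div_pow]; field_simp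
                _ ≤ (c^2)^1 := pow_le_pow_of_le_one (sq_nonneg c)
                    (by rw [sq]; exact mul_le_one₀ hc1 hc0.le hc1) hm1
                _ = c^2 := pow_one _
        _ = d * c^2 := by
            rw [Finset.sum_const, Nat.card_Icc]
            simp [nsmul_eq_mul]
    have hSn : 0 ≤ ∑ S ∈ T, |wCoeff f S| * ρ^S.card :=
      Finset.sum_nonneg fun S _ => mul_nonneg (abs_nonneg _) (by positivity)
    have hfinal : (∑ S ∈ T, |wCoeff f S| * ρ^S.card)^2 ≤ ε^2 := by
      have hAn : 0 ≤ ∑ S ∈ T, |wCoeff f S|^2 := Finset.sum_nonneg fun S _ => sq_nonneg _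
      have h1 : (∑ S ∈ T, |wCoeff f S| * ρ^S.card)^2 ≤ (9^d*ε^2) * (d*c^2) :=
        le_trans hcs (mul_le_mul hA hB
          (Finset.sum_nonneg fun S _ => sq_nonneg _) (by positivity))
      have hcc : (9:ℝ)^d * (d * c^2) ≤ 1 := by
        rw [hc_def, div_pow, one_pow, mul_pow]
        have h3sq : ((3:ℝ)^d)^2 = 9^d := by
          rw [← pow_mul, show (9:ℝ)=3^2 by norm_num, ← pow_mul, mul_comm]
        rw [h3sq]
        have h9pos : (0:ℝ) < 9^d := by positivity
        have heq : (9:ℝ)^d * (d * (1 / (9^d * (d:ℝ)^2))) = 1/d := by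
          field_simp
        rw [heq]
        rw [div_le_one hd0]
        exact_mod_cast hd
      have h2 : ((9:ℝ)^d*ε^2) * (d*c^2) ≤ ε^2 := by
        calc ((9:ℝ)^d*ε^2) * (d*c^2) = ε^2 * (9^d*(d*c^2)) := by ring
          _ ≤ ε^2 * 1 := mul_le_mul_of_nonneg_left hcc (sq_nonneg ε)
          _ = ε^2 := mul_one _
      exact le_trans h1 h2
    exact le_of_sq_le_sq hfinal hε
  linarith only [hsplit, hε_def]
end

section
/- Let N ∈ ℕ, 0 ≤ α < N with N − α odd, and let ψ(x) = sign(x₁ + ⋯ + x_N − α) on {-1,1}^N. Then for every complex z, ∑_{n=1}^{N} binom(N−1, n−1) ψ̂([n]) z^{n−1} = binom(N−1, (N−α−1)/2) · 2^{1−N} · (1+z)^{(N+α−1)/2} (1−z)^{(N−α−1)/2}, where ψ̂([n]) denotes the common Fourier coefficient ψ̂(S) for any S with |S| = n. -/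
open Finset

lemma aux_sum_powerset_card {γ : Type*} [DecidableEq γ] (s : Finset γ) (g : ℕ → ℂ) :
    ∑ T ∈ s.powerset, g T.card = ∑ k ∈ Finset.range (s.card + 1), (s.card.choose k : ℂ) * g k := by
  rw [Finset.sum_powerset]
  refine Finset.sum_congr rfl fun k hk => ?_
  rw [Finset.sum_congr rfl (fun T hT => by rw [(Finset.mem_powersetCard.mp hT).2]),
    Finset.sum_const, Finset.card_powersetCard, nsmul_eq_mul]

lemma aux_card_filter_lt {N n : ℕ} (h : n ≤ N) :
    (Finset.univ.filter fun i : Fin N => (i : ℕ) < n).card = n := by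
  have : (Finset.univ.filter fun i : Fin N => (i : ℕ) < n)
      = Finset.univ.map (Fin.castLEEmb h) := by
    ext i
    simp only [mem_filter, mem_univ, true_and, mem_map, Fin.castLEEmb]
    constructor
    · intro hi; exact ⟨⟨i, hi⟩, Fin.ext rfl⟩
    · rintro ⟨j, rfl⟩; exact j.isLt
  rw [this, Finset.card_map, Finset.card_univ, Fintype.card_fin]

lemma aux_sum_fun_bool {M : ℕ} (g : ℕ → ℂ) :
    ∑ y : Fin M → Bool, g (Finset.univ.filter (fun i => y i = true)).card
      = ∑ k ∈ Finset.range (M + 1), (M.choose k : ℂ) * g k := by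
  have := aux_sum_powerset_card (Finset.univ : Finset (Fin M)) g
  rw [Finset.card_univ, Fintype.card_fin] at this
  rw [← this]
  refine Finset.sum_nbij' (i := fun y => Finset.univ.filter (fun i => y i = true))
    (j := fun T => fun i => decide (i ∈ T)) ?_ ?_ ?_ ?_ ?_
  · intro y _; simp [Finset.mem_powerset]
  · intro T _; exact Finset.mem_univ _
  · intro y _; funext i; by_cases h : y i = true <;> simp [h]
  · intro T _; ext i; simp
  · intro y _; rfl

lemma aux_wCoeff_symm {N a : ℕ} (ψ : (Fin N → Bool) → ℝ)
    (hψ : ∀ x, ψ x = if (a : ℝ) ≤ ∑ i, cubeChi (x i) then 1 else -1)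
    {S T : Finset (Fin N)} (h : S.card = T.card) :
    wCoeff ψ S = wCoeff ψ T := by
  unfold wCoeff
  congr 1
  have hcS : Fintype.card {x // x ∈ S} = Fintype.card {x // x ∈ T} := by
    simpa [Fintype.card_coe] using h
  have hcC : Fintype.card {x // ¬ x ∈ S} = Fintype.card {x // ¬ x ∈ T} := by
    rw [Fintype.card_subtype_compl, Fintype.card_subtype_compl, hcS]
  let e1 : {x // x ∈ S} ≃ {x // x ∈ T} := Fintype.equivOfCardEq hcS
  let e2 : {x // ¬ x ∈ S} ≃ {x // ¬ x ∈ T} := Fintype.equivOfCardEq hcC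
  let σ : Equiv.Perm (Fin N) :=
    ((Equiv.sumCompl (· ∈ S)).symm.trans ((e1.sumCongr e2).trans (Equiv.sumCompl (· ∈ T))))
  have hmem : ∀ i, i ∈ S ↔ σ i ∈ T := by
    intro i
    by_cases hi : i ∈ S
    · simp only [σ, Equiv.trans_apply, Equiv.sumCompl_symm_apply_of_pos hi,
        Equiv.sumCongr_apply, Sum.map_inl, Equiv.sumCompl_apply_inl]
      exact ⟨fun _ => (e1 ⟨i, hi⟩).2, fun _ => hi⟩
    · simp only [σ, Equiv.trans_apply, Equiv.sumCompl_symm_apply_of_neg hi,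
        Equiv.sumCongr_apply, Sum.map_inr, Equiv.sumCompl_apply_inr]
      exact ⟨fun h' => absurd h' hi, fun h' => absurd h' (e2 ⟨i, hi⟩).2⟩
  have himg : S.image σ = T := by
    apply Finset.eq_of_subset_of_card_le
    · intro j hj
      obtain ⟨i, hi, rfl⟩ := Finset.mem_image.mp hj
      exact (hmem i).mp hi
    · rw [Finset.card_image_of_injective _ σ.injective, h]
  refine Fintype.sum_equiv (Equiv.arrowCongr σ (Equiv.refl Bool)) _ _ fun x => ?_
  have hx : ψ x = ψ (fun j => x (σ.symm j)) := by
    rw [hψ, hψ]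
    have : (∑ i, cubeChi (x (σ.symm i))) = ∑ i, cubeChi (x i) :=
      Equiv.sum_comp σ.symm (fun i => cubeChi (x i))
    rw [this]
  have hprod : (∏ j ∈ T, cubeChi (x (σ.symm j))) = ∏ i ∈ S, cubeChi (x i) := by
    rw [← himg, Finset.prod_image (fun i _ j _ hij => σ.injective hij)]
    simp
  have happ : (Equiv.arrowCongr σ (Equiv.refl Bool)) x = fun j => x (σ.symm j) := rfl
  rw [happ, ← hx, hprod]

theorem stmt15 {N α : ℕ} (hα : α < N) (hodd : Odd (N - α))
    (ψ : (Fin N → Bool) → ℝ)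
    (hψ : ∀ x, ψ x = if (α : ℝ) ≤ ∑ i, cubeChi (x i) then 1 else -1) :
    ∀ z : ℂ,
      ∑ n ∈ Finset.Icc 1 N, ((N - 1).choose (n - 1) : ℂ) *
          ((wCoeff ψ (Finset.univ.filter (fun i : Fin N => (i : ℕ) < n)) : ℝ) : ℂ) *
          z ^ (n - 1) =
        ((N - 1).choose ((N - α - 1) / 2) : ℂ) * (2 / 2 ^ N) *
          (1 + z) ^ ((N + α - 1) / 2) * (1 - z) ^ ((N - α - 1) / 2) := by
  intro z
  obtain ⟨M, rfl⟩ : ∃ M, N = M + 1 := ⟨N - 1, by omega⟩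
  have hαM : α ≤ M := by omega
  obtain ⟨c, hc⟩ : ∃ c, M - α = 2 * c := by
    rcases hodd with ⟨t, ht⟩
    exact ⟨t, by omega⟩
  set K := (M + α) / 2 with hKdef
  have hK2 : 2 * K = M + α := by omega
  have hKM : K ≤ M := by omega
  have hMK : M - K = c := by omega
  -- rewrite the RHS exponents
  have e1 : (M + 1 + α - 1) / 2 = K := by omega
  have e2 : (M + 1 - α - 1) / 2 = M - K := by omega
  have e3 : M + 1 - 1 = M := rfl
  rw [e1, e2, e3]
  set W : ℕ → ℂ := fun n =>
    ((wCoeff ψ (Finset.univ.filter fun i : Fin (M+1) => (i : ℕ) < n) : ℝ) : ℂ) with hW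
  -- Step 1 : LHS reindex
  have step1 : (∑ n ∈ Finset.Icc 1 (M+1), (M.choose (n - 1) : ℂ) *
        ((wCoeff ψ (Finset.univ.filter fun i : Fin (M+1) => (i : ℕ) < n) : ℝ) : ℂ)
          * z ^ (n - 1))
      = ∑ k ∈ Finset.range (M+1), (M.choose k : ℂ) * W (k+1) * z ^ k := by
    rw [show Finset.Icc 1 (M+1) = Finset.Ico 1 (M+2) by rfl, Finset.sum_Ico_eq_sum_range,
      show M + 2 - 1 = M + 1 from rfl]
    refine Finset.sum_congr rfl fun k _ => ?_
    rw [hW]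
    simp [Nat.add_sub_cancel, add_comm 1 k]
  set A : ℂ := ∑ x : Fin (M+1) → Bool, (ψ x : ℂ) * (cubeChi (x 0) : ℂ) *
      ∏ i ∈ (Finset.univ.erase (0 : Fin (M+1))), (z * (cubeChi (x i) : ℂ) + 1) with hA
  have hcard_erase : (Finset.univ.erase (0 : Fin (M+1))).card = M := by
    rw [Finset.card_erase_of_mem (Finset.mem_univ _), Finset.card_univ, Fintype.card_fin]
    omega
  -- Step 2 : sum over k equals A / 2^(M+1)
  have step2 : (∑ k ∈ Finset.range (M+1), (M.choose k : ℂ) * W (k+1) * z ^ k)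
      = A / 2 ^ (M+1) := by
    have hexp : ∀ x : Fin (M+1) → Bool,
        (∏ i ∈ (Finset.univ.erase (0 : Fin (M+1))), (z * (cubeChi (x i) : ℂ) + 1))
          = ∑ T ∈ (Finset.univ.erase (0 : Fin (M+1))).powerset,
              z ^ T.card * ∏ i ∈ T, (cubeChi (x i) : ℂ) := by
      intro x
      rw [Finset.prod_add]
      refine Finset.sum_congr rfl fun T hT => ?_
      rw [Finset.prod_const_one, mul_one, Finset.prod_mul_distrib, Finset.prod_const]
    have hA2 : A = ∑ T ∈ (Finset.univ.erase (0 : Fin (M+1))).powerset,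
        z ^ T.card * ∑ x : Fin (M+1) → Bool,
          (ψ x : ℂ) * ((cubeChi (x 0) : ℂ) * ∏ i ∈ T, (cubeChi (x i) : ℂ)) := by
      rw [hA]
      simp_rw [hexp, Finset.mul_sum]
      rw [Finset.sum_comm]
      refine Finset.sum_congr rfl fun T _ => Finset.sum_congr rfl fun x _ => by ring
    have hinner : ∀ T ∈ (Finset.univ.erase (0 : Fin (M+1))).powerset,
        (∑ x : Fin (M+1) → Bool,
            (ψ x : ℂ) * ((cubeChi (x 0) : ℂ) * ∏ i ∈ T, (cubeChi (x i) : ℂ)))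
          = W (T.card + 1) * 2 ^ (M+1) := by
      intro T hT
      have h0T : (0 : Fin (M+1)) ∉ T := fun h =>
        (Finset.mem_erase.mp (Finset.mem_powerset.mp hT h)).1 rfl
      have hTM : T.card ≤ M := by
        have := Finset.card_le_card (Finset.mem_powerset.mp hT)
        omega
      have hps : ∀ x : Fin (M+1) → Bool,
          (cubeChi (x 0) : ℂ) * ∏ i ∈ T, (cubeChi (x i) : ℂ)
            = ∏ i ∈ insert 0 T, (cubeChi (x i) : ℂ) :=
        fun x => (Finset.prod_insert (f := fun i => (cubeChi (x i) : ℂ)) h0T).symm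
      simp_rw [hps]
      have hcast : (∑ x : Fin (M+1) → Bool, (ψ x : ℂ) * ∏ i ∈ insert 0 T, (cubeChi (x i) : ℂ))
          = ((∑ x : Fin (M+1) → Bool, ψ x * ∏ i ∈ insert 0 T, cubeChi (x i) : ℝ) : ℂ) := by
        push_cast
        rfl
      rw [hcast]
      have hwc : (∑ x : Fin (M+1) → Bool, ψ x * ∏ i ∈ insert 0 T, cubeChi (x i))
          = wCoeff ψ (insert 0 T) * 2 ^ (M+1) := by
        rw [wCoeff]
        field_simp
      rw [hwc]
      have hsym : wCoeff ψ (insert 0 T)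
          = wCoeff ψ (Finset.univ.filter fun i : Fin (M+1) => (i : ℕ) < T.card + 1) := by
        refine aux_wCoeff_symm ψ hψ ?_
        rw [Finset.card_insert_of_notMem h0T, aux_card_filter_lt (by omega)]
      rw [hsym, hW]
      push_cast
      ring
    have hA3 : A = ∑ k ∈ Finset.range (M+1),
        (M.choose k : ℂ) * (z ^ k * (W (k+1) * 2 ^ (M+1))) := by
      rw [hA2, Finset.sum_congr rfl (fun T hT => by rw [hinner T hT])]
      have := aux_sum_powerset_card (Finset.univ.erase (0 : Fin (M+1)))
        (fun k => z ^ k * (W (k+1) * 2 ^ (M+1)))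
      rw [hcard_erase] at this
      exact this
    rw [hA3, Finset.sum_div]
    refine Finset.sum_congr rfl fun k _ => ?_
    have h2 : (2 : ℂ) ^ (M+1) ≠ 0 := pow_ne_zero _ two_ne_zero
    field_simp
  set g : ℕ → ℂ := fun n => (if n = K then (2:ℂ) else 0) * ((1 + z) ^ n * (1 - z) ^ (M - n))
    with hg
  have hprodsucc : ∀ (f : Fin (M+1) → ℂ),
      ∏ i ∈ Finset.univ.erase (0 : Fin (M+1)), f i = ∏ i : Fin M, f i.succ := by
    intro f
    rw [Fin.univ_succ, Finset.erase_cons, Finset.prod_map]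
    rfl
  have step3 : A = (M.choose K : ℂ) * (2 * ((1 + z) ^ K * (1 - z) ^ (M - K))) := by
    have hre : A = ∑ p : Bool × (Fin M → Bool),
        (ψ (Fin.cons p.1 p.2) : ℂ) * (cubeChi p.1 : ℂ) *
          ∏ i : Fin M, (z * (cubeChi (p.2 i) : ℂ) + 1) := by
      rw [hA]
      refine Fintype.sum_equiv (Fin.consEquiv (fun _ : Fin (M+1) => Bool)).symm _ _ fun x => ?_
      rw [hprodsucc (fun i => z * (cubeChi (x i) : ℂ) + 1)]
      have h1 : (Fin.consEquiv (fun _ : Fin (M+1) => Bool)).symm x = (x 0, Fin.tail x) := rfl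
      rw [h1]
      rw [Fin.cons_self_tail]
      rfl
    have hper : ∀ y : Fin M → Bool,
        ((ψ (Fin.cons true y) : ℂ) * (cubeChi true : ℂ) *
            ∏ i : Fin M, (z * (cubeChi (y i) : ℂ) + 1)) +
        ((ψ (Fin.cons false y) : ℂ) * (cubeChi false : ℂ) *
            ∏ i : Fin M, (z * (cubeChi (y i) : ℂ) + 1))
          = g (Finset.univ.filter fun i => y i = true).card := by
      intro y
      set k := (Finset.univ.filter fun i : Fin M => y i = true).card with hk
      have hkM : k ≤ M := by
        rw [hk]
        exact (Finset.card_filter_le _ _).trans (by simp)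
      have hnk : (Finset.univ.filter fun i : Fin M => ¬ y i = true).card = M - k := by
        have := Finset.card_filter_add_card_filter_not
          (s := (Finset.univ : Finset (Fin M))) (p := fun i => y i = true)
        rw [Finset.card_univ, Fintype.card_fin] at this
        omega
      have hsum : (∑ i, cubeChi (y i)) = 2 * (k : ℝ) - M := by
        unfold cubeChi
        rw [Finset.sum_ite, Finset.sum_const, Finset.sum_const, hnk, ← hk]
        simp only [nsmul_eq_mul, Nat.cast_sub hkM, mul_one, mul_neg]
        ring
      have hcons : ∀ b, (∑ i, cubeChi (Fin.cons b y i)) = cubeChi b + (2 * (k : ℝ) - M) := by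
        intro b
        rw [Fin.sum_univ_succ]
        simp only [Fin.cons_succ, Fin.cons_zero]
        rw [hsum]
      have hKr : 2 * (K : ℝ) = M + α := by exact_mod_cast hK2
      have hco : (ψ (Fin.cons true y) : ℝ) - ψ (Fin.cons false y)
          = if k = K then 2 else 0 := by
        rw [hψ, hψ, hcons true, hcons false]
        have ct : cubeChi true = 1 := by simp [cubeChi]
        have cf : cubeChi false = -1 := by simp [cubeChi]
        rw [ct, cf]
        have c1 : ((α : ℝ) ≤ 1 + (2 * (k : ℝ) - (M : ℝ))) ↔ K ≤ k := by
          constructor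
          · intro h
            have l : (K : ℝ) < (k : ℝ) + 1 := by linarith
            have : K < k + 1 := by exact_mod_cast l
            omega
          · intro h
            have : (K : ℝ) ≤ (k : ℝ) := by exact_mod_cast h
            linarith
        have c2 : ((α : ℝ) ≤ -1 + (2 * (k : ℝ) - (M : ℝ))) ↔ K < k := by
          constructor
          · intro h
            have l : (K : ℝ) < (k : ℝ) := by linarith
            exact_mod_cast l
          · intro h
            have : (K : ℝ) + 1 ≤ (k : ℝ) := by exact_mod_cast h
            linarith
        simp only [c1, c2]
        rcases Nat.lt_trichotomy k K with h | h | h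
        · rw [if_neg (by omega), if_neg (by omega), if_neg (by omega)]
          norm_num
        · rw [if_pos (by omega), if_neg (by omega), if_pos h]
          norm_num
        · rw [if_pos (by omega), if_pos (by omega), if_neg (by omega)]
          norm_num
      have hP : (∏ i : Fin M, (z * (cubeChi (y i) : ℂ) + 1))
          = (1 + z) ^ k * (1 - z) ^ (M - k) := by
        have hfac : ∀ i : Fin M, z * (cubeChi (y i) : ℂ) + 1
            = if y i = true then 1 + z else 1 - z := by
          intro i
          by_cases h : y i = true <;> simp [h, cubeChi] <;> ring
        rw [Finset.prod_congr rfl (fun i _ => hfac i), Finset.prod_ite,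
          Finset.prod_const, Finset.prod_const, hnk, ← hk]
      have hcoC : (ψ (Fin.cons true y) : ℂ) - (ψ (Fin.cons false y) : ℂ)
          = if k = K then (2:ℂ) else 0 := by
        have := congrArg (fun r : ℝ => (r : ℂ)) hco
        push_cast at this
        rw [this]
        by_cases h : k = K <;> simp [h]
      calc ((ψ (Fin.cons true y) : ℂ) * (cubeChi true : ℂ) *
            ∏ i : Fin M, (z * (cubeChi (y i) : ℂ) + 1)) +
          ((ψ (Fin.cons false y) : ℂ) * (cubeChi false : ℂ) *
            ∏ i : Fin M, (z * (cubeChi (y i) : ℂ) + 1))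
          = ((ψ (Fin.cons true y) : ℂ) - (ψ (Fin.cons false y) : ℂ)) *
              ∏ i : Fin M, (z * (cubeChi (y i) : ℂ) + 1) := by
            simp only [cubeChi]
            norm_num
            ring
        _ = g k := by rw [hcoC, hP, hg]
    rw [hre, Fintype.sum_prod_type, Fintype.sum_bool, ← Finset.sum_add_distrib,
      Finset.sum_congr rfl (fun y _ => hper y), aux_sum_fun_bool g]
    rw [Finset.sum_eq_single K]
    · rw [hg]
      simp
    · intro b _ hbK
      rw [hg]
      simp [hbK]
    · intro hK
      exact absurd (Finset.mem_range.mpr (by omega)) hK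
  rw [step1, step2, step3, Nat.choose_symm hKM]
  have h2 : (2 : ℂ) ^ (M+1) ≠ 0 := pow_ne_zero _ two_ne_zero
  field_simp
end

section
/- For 0 ≤ α ≤ N−1, define G(r) = sup_{z∈𝕋} |1+zr|^{(N+α−1)/2}|1−zr|^{(N−α−1)/2} for r ∈ [0,1], and set r_α = α/((N−1)+√((N−1)²−α²)). Then G(r) = (1+r)^{(N+α−1)/2}(1−r)^{(N−α−1)/2} for r ∈ [0, r_α], and G(r) = (1+r²)^{(N−1)/2} (1+α/(N−1))^{(N+α−1)/4} (1−α/(N−1))^{(N−α−1)/4} for r ∈ [r_α, 1]. -/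
noncomputable def Gfun (N α : ℕ) (r : ℝ) : ℝ :=
  ⨆ z : Metric.sphere (0 : ℂ) 1,
    ‖1 + (z : ℂ) * r‖ ^ (((N : ℝ) + α - 1) / 2) *
      ‖1 - (z : ℂ) * r‖ ^ (((N : ℝ) - α - 1) / 2)

noncomputable def ralpha (N α : ℕ) : ℝ :=
  α / (((N : ℝ) - 1) + Real.sqrt (((N : ℝ) - 1) ^ 2 - (α : ℝ) ^ 2))

set_option maxHeartbeats 1000000

lemma exp_bound' {x y p : ℝ} (hx : 0 ≤ x) (hy : 0 < y) (hp : 0 ≤ p) :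
    x ^ p ≤ y ^ p * Real.exp (p * ((x - y)/y)) := by
  have h0 := Real.add_one_le_exp ((x-y)/y)
  have h1 : x ≤ y * Real.exp ((x-y)/y) := by
    have : ((x-y)/y + 1) * y ≤ Real.exp ((x-y)/y) * y :=
      mul_le_mul_of_nonneg_right h0 hy.le
    calc x = ((x-y)/y + 1) * y := by field_simp; ring
    _ ≤ Real.exp ((x-y)/y) * y := this
    _ = y * Real.exp ((x-y)/y) := mul_comm _ _
  calc x ^ p ≤ (y * Real.exp ((x-y)/y)) ^ p := Real.rpow_le_rpow hx h1 hp
  _ = y ^ p * (Real.exp ((x-y)/y)) ^ p := Real.mul_rpow hy.le (Real.exp_pos _).le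
  _ = y ^ p * Real.exp (p * ((x-y)/y)) := by
      rw [← Real.exp_mul, mul_comm ((x-y)/y) p]

lemma key_bound {s u v p q : ℝ} (hp : 0 ≤ p) (hq : 0 ≤ q)
    (h1 : 0 < s + v) (h2 : 0 < s - v) (h3 : 0 ≤ s + u) (h4 : 0 ≤ s - u)
    (hcond : (u - v) * (p/(s+v) - q/(s-v)) ≤ 0) :
    (s+u)^p * (s-u)^q ≤ (s+v)^p * (s-v)^q := by
  have A := exp_bound' h3 h1 hp (y := s+v)
  have B := exp_bound' h4 h2 hq (y := s-v)
  have hA : ((s+u) - (s+v)) = u - v := by ring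
  have hB : ((s-u) - (s-v)) = v - u := by ring
  rw [hA] at A; rw [hB] at B
  have hexp : Real.exp (p * ((u-v)/(s+v))) * Real.exp (q * ((v-u)/(s-v))) ≤ 1 := by
    rw [← Real.exp_add, Real.exp_le_one_iff]
    have : p * ((u-v)/(s+v)) + q * ((v-u)/(s-v)) = (u - v) * (p/(s+v) - q/(s-v)) := by
      ring
    linarith [hcond, this.le, this.ge]
  calc (s+u)^p * (s-u)^q
      ≤ ((s+v)^p * Real.exp (p * ((u-v)/(s+v)))) * ((s-v)^q * Real.exp (q * ((v-u)/(s-v)))) := by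
        apply mul_le_mul A B (Real.rpow_nonneg h4 q) (by positivity)
    _ = ((s+v)^p * (s-v)^q) * (Real.exp (p * ((u-v)/(s+v))) * Real.exp (q * ((v-u)/(s-v)))) := by ring
    _ ≤ ((s+v)^p * (s-v)^q) * 1 := by
        apply mul_le_mul_of_nonneg_left hexp (by positivity)
    _ = _ := mul_one _


lemma resq {z : ℂ} (hz : ‖z‖ = 1) : z.re^2 + z.im^2 = 1 := by
  have h := Complex.sq_norm z
  rw [hz] at h
  simpa [Complex.normSq_apply, sq] using h.symm

lemma abs_rpow_add {z : ℂ} (hz : ‖z‖ = 1) (r e : ℝ) :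
    ‖1 + z * r‖ ^ e = (1 + r^2 + 2*r*z.re) ^ (e/2) := by
  have h1 : Complex.normSq (1 + z * r) = 1 + r^2 + 2*r*z.re := by
    have := resq hz
    simp [Complex.normSq_apply, Complex.add_re, Complex.add_im, Complex.mul_re, Complex.mul_im]
    nlinarith [this]
  have h2 : (0:ℝ) ≤ 1 + r^2 + 2*r*z.re := h1 ▸ Complex.normSq_nonneg _
  rw [Complex.norm_def, h1, Real.sqrt_eq_rpow, ← Real.rpow_mul h2]
  ring_nf

lemma abs_rpow_sub {z : ℂ} (hz : ‖z‖ = 1) (r e : ℝ) :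
    ‖1 - z * r‖ ^ e = (1 + r^2 - 2*r*z.re) ^ (e/2) := by
  have h1 : Complex.normSq (1 - z * r) = 1 + r^2 - 2*r*z.re := by
    have := resq hz
    simp [Complex.normSq_apply, Complex.sub_re, Complex.sub_im, Complex.mul_re, Complex.mul_im]
    nlinarith [this]
  have h2 : (0:ℝ) ≤ 1 + r^2 - 2*r*z.re := h1 ▸ Complex.normSq_nonneg _
  rw [Complex.norm_def, h1, Real.sqrt_eq_rpow, ← Real.rpow_mul h2]
  ring_nf


instance sphereNe : Nonempty (Metric.sphere (0:ℂ) 1) := ⟨⟨1, by simp⟩⟩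

lemma iSup_eq_of {f : Metric.sphere (0:ℂ) 1 → ℝ} {M : ℝ}
    (hub : ∀ z, f z ≤ M) (hw : ∃ z, f z = M) : (⨆ z, f z) = M := by
  obtain ⟨z, hz⟩ := hw
  refine le_antisymm (ciSup_le hub) ?_
  calc M = f z := hz.symm
  _ ≤ ⨆ w, f w := le_ciSup ⟨M, by rintro _ ⟨w, rfl⟩; exact hub w⟩ z

-- quadratic identity
lemma quad_id (n a r : ℝ) (hD : 0 ≤ n^2 - a^2) :
    (n + Real.sqrt (n^2 - a^2)) * (a*(1+r^2) - 2*n*r)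
      = ((n + Real.sqrt (n^2 - a^2))*r - a) * (a*r - (n + Real.sqrt (n^2 - a^2))) := by
  have h := Real.sq_sqrt hD
  linear_combination r * h

lemma sq_rpow_half (t e : ℝ) (ht : 0 ≤ t) : (t^2) ^ (e/2) = t ^ e := by
  rw [← Real.rpow_natCast t 2, ← Real.rpow_mul ht]
  congr 1; ring

lemma sq_rpow (t e : ℝ) (ht : 0 ≤ t) : (t^2) ^ e = t ^ (2*e) := by
  rw [← Real.rpow_natCast t 2, ← Real.rpow_mul ht]
  norm_num

lemma Gfun_eq (N α : ℕ) (r v : ℝ) (hr0 : 0 ≤ r)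
    (hp : 0 ≤ (N:ℝ)+α-1) (hq : 0 ≤ (N:ℝ)-α-1)
    (hv1 : 0 < 1+r^2+v) (hv2 : 0 < 1+r^2-v)
    (hvr : ∃ c : ℝ, -1 ≤ c ∧ c ≤ 1 ∧ 2*r*c = v)
    (hcond : ∀ u : ℝ, -(2*r) ≤ u → u ≤ 2*r →
      (u - v) * ((((N:ℝ)+α-1)/4)/(1+r^2+v) - (((N:ℝ)-α-1)/4)/(1+r^2-v)) ≤ 0) :
    Gfun N α r = (1+r^2+v) ^ (((N:ℝ)+α-1)/4) * (1+r^2-v) ^ (((N:ℝ)-α-1)/4) := by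
  have he1 : (((N:ℝ)+α-1)/2)/2 = ((N:ℝ)+α-1)/4 := by ring
  have he2 : (((N:ℝ)-α-1)/2)/2 = ((N:ℝ)-α-1)/4 := by ring
  have hp4 : 0 ≤ ((N:ℝ)+α-1)/4 := by linarith
  have hq4 : 0 ≤ ((N:ℝ)-α-1)/4 := by linarith
  rw [Gfun]
  apply iSup_eq_of
  · rintro ⟨z, hz⟩
    have hz' : ‖z‖ = 1 := by
      exact mem_sphere_zero_iff_norm.1 hz
    simp only [abs_rpow_add hz', abs_rpow_sub hz', he1, he2]
    have hre := Complex.abs_re_le_norm z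
    rw [hz'] at hre
    have hre' := abs_le.1 hre
    have hu1 : -(2*r) ≤ 2*r*z.re := by nlinarith [hre'.1]
    have hu2 : 2*r*z.re ≤ 2*r := by nlinarith [hre'.2]
    exact key_bound hp4 hq4 hv1 hv2
      (by nlinarith [sq_nonneg (1-r)]) (by nlinarith [sq_nonneg (1-r)])
      (hcond _ hu1 hu2)
  · obtain ⟨c, hc1, hc2, hcv⟩ := hvr
    have hc2' : 0 ≤ 1 - c^2 := by nlinarith
    set t := Real.sqrt (1 - c^2) with ht
    have hzsq : c^2 + t^2 = 1 := by
      rw [ht, Real.sq_sqrt hc2']; ring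
    have hmem : (⟨c, t⟩ : ℂ) ∈ Metric.sphere (0:ℂ) 1 := by
      rw [mem_sphere_zero_iff_norm, Complex.norm_def,
        Complex.normSq_apply]
      rw [show c*c + t*t = c^2+t^2 by ring, hzsq, Real.sqrt_one]
    refine ⟨⟨⟨c, t⟩, hmem⟩, ?_⟩
    have hz' : ‖(⟨c, t⟩ : ℂ)‖ = 1 := by
      exact mem_sphere_zero_iff_norm.1 hmem
    simp only [abs_rpow_add hz', abs_rpow_sub hz', he1, he2]
    rw [hcv]

lemma Gfun_one (N α : ℕ) (hp : 0 ≤ (N:ℝ)+α-1) (hα : (α:ℝ) = (N:ℝ)-1) :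
    Gfun N α 1 = 2 ^ (((N:ℝ)+α-1)/2) := by
  have hq0 : ((N:ℝ)-α-1)/2 = 0 := by rw [hα]; ring
  rw [Gfun, hq0]
  apply iSup_eq_of
  · rintro ⟨z, hz⟩
    have hz' : ‖z‖ = 1 := by
      exact mem_sphere_zero_iff_norm.1 hz
    rw [Real.rpow_zero, mul_one]
    apply Real.rpow_le_rpow (norm_nonneg _) ?_ (by linarith)
    calc ‖1 + z * ((1:ℝ):ℂ)‖ ≤ ‖(1:ℂ)‖ + ‖z * ((1:ℝ):ℂ)‖ :=
      norm_add_le _ _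
    _ = 2 := by simp [hz']; norm_num
  · refine ⟨⟨1, by simp⟩, ?_⟩
    rw [Real.rpow_zero, mul_one]
    norm_num


theorem stmt17 {N α : ℕ} (hN : 1 ≤ N) (hα : α ≤ N - 1) :
    (∀ r ∈ Set.Icc (0 : ℝ) (ralpha N α),
      Gfun N α r = (1 + r) ^ (((N : ℝ) + α - 1) / 2) * (1 - r) ^ (((N : ℝ) - α - 1) / 2)) ∧
    (∀ r ∈ Set.Icc (ralpha N α) (1 : ℝ),
      Gfun N α r = (1 + r ^ 2) ^ (((N : ℝ) - 1) / 2) *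
        (1 + (α : ℝ) / ((N : ℝ) - 1)) ^ (((N : ℝ) + α - 1) / 4) *
        (1 - (α : ℝ) / ((N : ℝ) - 1)) ^ (((N : ℝ) - α - 1) / 4)) := by
  have hα1 : α + 1 ≤ N := by omega
  have hNR : (1:ℝ) ≤ (N:ℝ) := by exact_mod_cast hN
  have hαR : (α:ℝ) ≤ (N:ℝ) - 1 := by
    have h := (Nat.cast_le (α := ℝ)).2 hα1
    push_cast at h; linarith
  have hα0 : (0:ℝ) ≤ (α:ℝ) := Nat.cast_nonneg α
  have hp : 0 ≤ (N:ℝ)+α-1 := by linarith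
  have hq : 0 ≤ (N:ℝ)-α-1 := by linarith
  by_cases hN1 : N = 1
  · -- trivial case N = 1
    subst hN1
    have hα0' : α = 0 := by omega
    subst hα0'
    have hE : ((1:ℕ):ℝ) + ((0:ℕ):ℝ) - 1 = 0 := by norm_num
    have hE' : ((1:ℕ):ℝ) - ((0:ℕ):ℝ) - 1 = 0 := by norm_num
    constructor <;> intro r _ <;>
      rw [Gfun, hE, hE'] <;>
      simp only [zero_div, Real.rpow_zero, mul_one, one_mul, ciSup_const] <;>
      norm_num
  · have hN2 : 2 ≤ N := by omega
    have hn1 : (1:ℝ) ≤ (N:ℝ) - 1 := by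
      have : (2:ℝ) ≤ (N:ℝ) := by exact_mod_cast hN2
      linarith
    have hn0 : (0:ℝ) < (N:ℝ) - 1 := by linarith
    have hD : 0 ≤ ((N:ℝ)-1)^2 - (α:ℝ)^2 := by nlinarith
    set S := Real.sqrt (((N:ℝ)-1)^2 - (α:ℝ)^2) with hS
    have hS0 : 0 ≤ S := Real.sqrt_nonneg _
    have hK : 0 < (N:ℝ)-1 + S := by linarith
    have hαK : (α:ℝ) ≤ (N:ℝ)-1+S := by linarith
    have hral : ralpha N α = (α:ℝ)/((N:ℝ)-1+S) := by rw [ralpha, ← hS]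
    have hid := quad_id ((N:ℝ)-1) (α:ℝ)
    constructor
    · -- Part 1 : r ∈ [0, ralpha]
      intro r hr
      obtain ⟨hr0, hrr⟩ := hr
      rw [hral] at hrr
      have hr1 : r ≤ 1 := hrr.trans (by rw [div_le_one hK]; exact hαK)
      rcases eq_or_lt_of_le hr1 with heq | hlt
      · -- r = 1 forces α = N-1
        have hKα : (N:ℝ)-1+S ≤ (α:ℝ) := by
          have := (one_le_div hK).1 (heq ▸ hrr)
          linarith
        have hαn : (α:ℝ) = (N:ℝ)-1 := le_antisymm hαR (by linarith)
        rw [heq, Gfun_one N α hp hαn,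
          show ((N:ℝ)-α-1)/2 = 0 by rw [hαn]; ring, Real.rpow_zero, mul_one]
        norm_num
      · -- r < 1 : boundary maximum
        have hquad : 0 ≤ (α:ℝ)*(1+r^2) - 2*((N:ℝ)-1)*r := by
          have hid' := hid r hD
          rw [← hS] at hid'
          have h1 : ((N:ℝ)-1+S)*r - α ≤ 0 := by
            have := (le_div_iff₀ hK).1 hrr
            linarith
          have h2 : (α:ℝ)*r - ((N:ℝ)-1+S) ≤ 0 := by nlinarith
          nlinarith [mul_nonneg (neg_nonneg.2 h1) (neg_nonneg.2 h2)]
        have hv1 : 0 < 1+r^2+2*r := by nlinarith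
        have hv2 : 0 < 1+r^2-2*r := by nlinarith [sq_nonneg (1-r)]
        have hcond : ∀ u : ℝ, -(2*r) ≤ u → u ≤ 2*r →
            (u - 2*r) * ((((N:ℝ)+α-1)/4)/(1+r^2+2*r) - (((N:ℝ)-α-1)/4)/(1+r^2-2*r)) ≤ 0 := by
          intro u _ hu2
          have hDpos : 0 ≤ (((N:ℝ)+α-1)/4)/(1+r^2+2*r) - (((N:ℝ)-α-1)/4)/(1+r^2-2*r) := by
            rw [sub_nonneg, div_le_div_iff₀ hv2 hv1]
            nlinarith
          exact mul_nonpos_iff.2 (Or.inr ⟨by linarith, hDpos⟩)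
        rw [Gfun_eq N α r (2*r) hr0 hp hq hv1 hv2 ⟨1, by norm_num, le_refl 1, by ring⟩ hcond,
          show (1:ℝ)+r^2+2*r = (1+r)^2 by ring, show (1:ℝ)+r^2-2*r = (1-r)^2 by ring,
          sq_rpow (1+r) _ (by linarith), sq_rpow (1-r) _ (by linarith),
          show 2*(((N:ℝ)+α-1)/4) = ((N:ℝ)+α-1)/2 by ring,
          show 2*(((N:ℝ)-α-1)/4) = ((N:ℝ)-α-1)/2 by ring]
    · -- Part 2 : r ∈ [ralpha, 1]
      intro r hr
      obtain ⟨hrr, hr1⟩ := hr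
      rw [hral] at hrr
      have hr0 : 0 ≤ r := le_trans (by positivity) hrr
      by_cases hαn : (α:ℝ) = (N:ℝ)-1
      · -- α = N-1 : forces r = 1
        have hS0' : S = 0 := by
          rw [hS, hαn]; simp
        have hre1 : r = 1 := by
          apply le_antisymm hr1
          rw [hS0', hαn, add_zero, div_self (ne_of_gt hn0)] at hrr
          exact hrr
        rw [hre1, Gfun_one N α hp hαn,
          show (1:ℝ) - (α:ℝ)/((N:ℝ)-1) = 0 by rw [hαn, div_self (ne_of_gt hn0)]; ring,
          show ((N:ℝ)-α-1)/4 = 0 by rw [hαn]; ring, Real.rpow_zero, mul_one,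
          show (1:ℝ) + (α:ℝ)/((N:ℝ)-1) = 2 by rw [hαn, div_self (ne_of_gt hn0)]; ring,
          show (1:ℝ)+(1:ℝ)^2 = 2 by norm_num,
          ← Real.rpow_add (by norm_num : (0:ℝ) < 2)]
        congr 1
        rw [hαn]; ring
      · -- 0 ≤ α < N-1
        have hαn' : (α:ℝ) < (N:ℝ)-1 := lt_of_le_of_ne hαR hαn
        have hs : (0:ℝ) < 1+r^2 := by positivity
        set v := (1+r^2)*(α:ℝ)/((N:ℝ)-1) with hv
        have hv0 : 0 ≤ v := by positivity
        have hv1 : 0 < 1+r^2+v := by linarith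
        have hv2 : 0 < 1+r^2-v := by
          rw [hv, sub_pos, div_lt_iff₀ hn0]
          nlinarith
        have hquad2 : (α:ℝ)*(1+r^2) ≤ 2*((N:ℝ)-1)*r := by
          have hid' := hid r hD
          rw [← hS] at hid'
          have h1 : 0 ≤ ((N:ℝ)-1+S)*r - α := by
            have := (div_le_iff₀ hK).1 hrr
            linarith
          have h2 : (α:ℝ)*r - ((N:ℝ)-1+S) ≤ 0 := by nlinarith
          nlinarith [mul_nonpos_iff.2 (Or.inr ⟨h2, h1⟩)]
        have hvr : ∃ c : ℝ, -1 ≤ c ∧ c ≤ 1 ∧ 2*r*c = v := by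
          rcases eq_or_lt_of_le hr0 with hre0 | hrpos
          · -- r = 0 forces α = 0 hence v = 0
            have hα00 : (α:ℝ) = 0 := by
              have h := mul_le_mul_of_nonneg_right hrr hK.le
              rw [div_mul_cancel₀ _ (ne_of_gt hK)] at h
              nlinarith
            refine ⟨0, by norm_num, by norm_num, ?_⟩
            rw [hv, hα00]; ring
          · refine ⟨v/(2*r), ?_, ?_, ?_⟩
            · have : 0 ≤ v/(2*r) := by positivity
              linarith
            · rw [div_le_one (by linarith)]
              rw [hv, div_le_iff₀ hn0]
              nlinarith
            · field_simp
        have hcond : ∀ u : ℝ, -(2*r) ≤ u → u ≤ 2*r →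
            (u - v) * ((((N:ℝ)+α-1)/4)/(1+r^2+v) - (((N:ℝ)-α-1)/4)/(1+r^2-v)) ≤ 0 := by
          intro u _ _
          have hz0 : (((N:ℝ)+α-1)/4)/(1+r^2+v) - (((N:ℝ)-α-1)/4)/(1+r^2-v) = 0 := by
            rw [sub_eq_zero, div_eq_div_iff (ne_of_gt hv1) (ne_of_gt hv2), hv]
            field_simp
            ring
          rw [hz0, mul_zero]
        rw [Gfun_eq N α r v hr0 hp hq hv1 hv2 hvr hcond,
          show (1:ℝ)+r^2+v = (1+r^2)*(1+(α:ℝ)/((N:ℝ)-1)) by rw [hv]; field_simp,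
          show (1:ℝ)+r^2-v = (1+r^2)*(1-(α:ℝ)/((N:ℝ)-1)) by rw [hv]; field_simp,
          Real.mul_rpow hs.le (by positivity),
          Real.mul_rpow hs.le (by
            rw [sub_nonneg, div_le_one hn0]; exact hαR),
          show ((1+r^2) ^ (((N:ℝ)+α-1)/4) * (1+(α:ℝ)/((N:ℝ)-1)) ^ (((N:ℝ)+α-1)/4)) *
              ((1+r^2) ^ (((N:ℝ)-α-1)/4) * (1-(α:ℝ)/((N:ℝ)-1)) ^ (((N:ℝ)-α-1)/4)) =
            ((1+r^2) ^ (((N:ℝ)+α-1)/4) * (1+r^2) ^ (((N:ℝ)-α-1)/4)) *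
              (1+(α:ℝ)/((N:ℝ)-1)) ^ (((N:ℝ)+α-1)/4) *
              (1-(α:ℝ)/((N:ℝ)-1)) ^ (((N:ℝ)-α-1)/4) by ring,
          ← Real.rpow_add hs,
          show ((N:ℝ)+α-1)/4 + ((N:ℝ)-α-1)/4 = ((N:ℝ)-1)/2 by ring]
end
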